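/- Let M be a BCK-module with Baig topology admitted by a decreasing sequence of submodules, and endow M × M with the product topology. Then the addition map f : M × M → M, f(m, m') = m + m', is continuous. -/

import Mathlib

/-- A BCK-algebra `(X, *, 0)`. The order `a ≤ b` is defined by `star a b = zero`. -/
structure BCKAlgebra (X : Type) where
  star : X → X → X
  zero : X
  bck1 : ∀ a b c, star (star (star a b) (star a c)) (star c b) = zero
  bck2 : ∀ a b, star (star a (star a b)) b = zero
  bck3 : ∀ a, star a a = zero
  bck4 : ∀ a, star zero a = zero
  bck5 : ∀ a b, star a b = zero → star b a = zero → a = b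
/-- A bounded commutative BCK-algebra. -/
structure BoundedCommBCKAlgebra (X : Type) extends BCKAlgebra X where
  one : X
  bounded : ∀ a, star a one = zero
  comm : ∀ a b, star b (star b a) = star a (star a b)

/-- The coset `v + S` of a subset `S` of an abelian group. -/
def coset {M : Type} [AddCommGroup M] (v : M) (S : Set M) : Set M :=
  (fun u => v + u) '' S

/-- A BCK-module structure over a bounded commutative BCK-algebra `A` on an
abelian group `M`. -/
structure BCKModuleStr {X : Type} (A : BoundedCommBCKAlgebra X) (M : Type)
    [AddCommGroup M] where
  smul : X → M → M
  smul_wedge : ∀ a b m, smul (A.star b (A.star b a)) m = smul a (smul b m)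
  smul_add : ∀ a m₁ m₂, smul a (m₁ + m₂) = smul a m₁ + smul a m₂
  zero_smul : ∀ m, smul A.zero m = 0
  one_smul : ∀ m, smul A.one m = m

/-- A subgroup `S` of `M` is a BCK-submodule if it is closed under the scalar action. -/
def IsBCKSubmodule {X : Type} {A : BoundedCommBCKAlgebra X} {M : Type} [AddCommGroup M]
    (s : BCKModuleStr A M) (S : AddSubgroup M) : Prop :=
  ∀ x m, m ∈ S → s.smul x m ∈ S

/-- The Baig open-set predicate for a (decreasing) sequence of subgroups. -/
def baigIsOpen {M : Type} [AddCommGroup M] (Mn : ℕ → AddSubgroup M) (V : Set M) : Prop :=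
  ∀ v ∈ V, ∃ n, coset v (Mn n) ⊆ V

/-- The Baig topology admitted by a decreasing sequence of subgroups. -/
def baigTopology {M : Type} [AddCommGroup M] (Mn : ℕ → AddSubgroup M)
    (hdec : ∀ n, Mn (n + 1) ≤ Mn n) : TopologicalSpace M where
  IsOpen := baigIsOpen Mn
  isOpen_univ := fun _ _ => ⟨0, fun _ _ => trivial⟩
  isOpen_inter := by
    intro U V hU hV v hv
    obtain ⟨n₁, h₁⟩ := hU v hv.1
    obtain ⟨n₂, h₂⟩ := hV v hv.2
    refine ⟨max n₁ n₂, fun x hx => ?_⟩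
    obtain ⟨u, hu, rfl⟩ := hx
    exact ⟨h₁ ⟨u, antitone_nat_of_succ_le hdec (le_max_left n₁ n₂) hu, rfl⟩,
           h₂ ⟨u, antitone_nat_of_succ_le hdec (le_max_right n₁ n₂) hu, rfl⟩⟩
  isOpen_sUnion := by
    intro S hS v hv
    obtain ⟨t, ht, hvt⟩ := hv
    obtain ⟨n, hn⟩ := hS t ht v hvt
    exact ⟨n, hn.trans (Set.subset_sUnion_of_mem ht)⟩

/-- Addition `(m, m') ↦ m + m'` is continuous from `M × M` (product of Baig
topologies) to `M` with the Baig topology. -/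
theorem add_continuous {X M : Type} [AddCommGroup M]
    {A : BoundedCommBCKAlgebra X} (s : BCKModuleStr A M) (Mn : ℕ → AddSubgroup M)
    (hsub : ∀ n, IsBCKSubmodule s (Mn n)) (hdec : ∀ n, Mn (n + 1) ≤ Mn n) :
    @Continuous (M × M) M
      (@instTopologicalSpaceProd M M (baigTopology Mn hdec) (baigTopology Mn hdec))
      (baigTopology Mn hdec) (fun p => p.1 + p.2) := by
  letI : TopologicalSpace M := baigTopology Mn hdec
  have hcoset_open : ∀ (v : M) (n : ℕ), baigIsOpen Mn (coset v (Mn n)) := by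
    intro v n w hw
    obtain ⟨u, hu, rfl⟩ := hw
    exact ⟨n, fun x hx => by
      obtain ⟨u', hu', rfl⟩ := hx
      exact ⟨u + u', (Mn n).add_mem hu hu', (add_assoc v u u').symm⟩⟩
  rw [continuous_def]
  intro V hV
  rw [isOpen_prod_iff]
  intro a b hab
  obtain ⟨n, hn⟩ := hV (a + b) hab
  refine ⟨coset a (Mn n), coset b (Mn n), hcoset_open a n, hcoset_open b n,
    ⟨0, (Mn n).zero_mem, add_zero a⟩, ⟨0, (Mn n).zero_mem, add_zero b⟩,
    fun p hp => ?_⟩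
  obtain ⟨⟨u, hu, h1⟩, ⟨u', hu', h2⟩⟩ := hp
  have : p.1 + p.2 ∈ coset (a + b) (Mn n) :=
    ⟨u + u', (Mn n).add_mem hu hu', by rw [← h1, ← h2]; beta_reduce; abel⟩
  exact hn this
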